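/- Let G be a group such that G/Z(G) is locally finite. Then the derived subgroup G' is locally finite. -/

import Mathlib

/-- A group is locally finite if every finitely generated subgroup is finite. -/
def IsLocallyFiniteGroup (G : Type*) [Group G] : Prop :=
  ∀ H : Subgroup G, H.FG → Finite H

open scoped commutatorElement

section Aux

variable {G : Type*} [Group G]

private lemma comm_center_left (x y z : G) (hz : z ∈ Subgroup.center G) :
    ⁅x * z, y⁆ = ⁅x, y⁆ := by
  have h := Subgroup.mem_center_iff.mp hz
  have hzy : ∀ t : G, z * (y * t) = y * (z * t) := fun t => by
    rw [← mul_assoc, ← h y, mul_assoc]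
  simp only [commutatorElement_def, mul_inv_rev, mul_assoc]
  rw [hzy, mul_inv_cancel_left]

private lemma comm_center (x y z w : G) (hz : z ∈ Subgroup.center G)
    (hw : w ∈ Subgroup.center G) : ⁅x * z, y * w⁆ = ⁅x, y⁆ := by
  rw [comm_center_left _ _ _ hz, ← inv_inv ⁅x, y * w⁆, commutatorElement_inv,
    comm_center_left _ _ _ hw, ← commutatorElement_inv, inv_inv]

private lemma finite_commutatorSet_of_quotient_center
    [Finite (G ⧸ Subgroup.center G)] : Finite (commutatorSet G) := by
  refine Finite.of_surjective
    (fun p : (G ⧸ Subgroup.center G) × (G ⧸ Subgroup.center G) =>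
      (⟨⁅p.1.out, p.2.out⁆, commutator_mem_commutatorSet _ _⟩ : commutatorSet G)) ?_
  rintro ⟨g, a, b, rfl⟩
  refine ⟨(QuotientGroup.mk a, QuotientGroup.mk b), Subtype.ext ?_⟩
  obtain ⟨z, hz⟩ := QuotientGroup.mk_out_eq_mul (Subgroup.center G) a
  obtain ⟨w, hw⟩ := QuotientGroup.mk_out_eq_mul (Subgroup.center G) b
  show ⁅(QuotientGroup.mk a : G ⧸ Subgroup.center G).out,
        (QuotientGroup.mk b : G ⧸ Subgroup.center G).out⁆ = ⁅a, b⁆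
  rw [hz, hw, comm_center _ _ _ _ z.2 w.2]

private lemma mem_closure_finset {S : Set G} {x : G} (hx : x ∈ Subgroup.closure S) :
    ∃ F : Finset G, ↑F ⊆ S ∧ x ∈ Subgroup.closure (F : Set G) := by
  classical
  induction hx using Subgroup.closure_induction with
  | mem y hy => exact ⟨{y}, by simpa using hy, Subgroup.subset_closure (by simp)⟩
  | one => exact ⟨∅, by simp, one_mem _⟩
  | mul y z _ _ hy hz =>
      obtain ⟨F₁, hF₁, hy⟩ := hy
      obtain ⟨F₂, hF₂, hz⟩ := hz
      refine ⟨F₁ ∪ F₂, by simp [hF₁, hF₂, Set.union_subset], ?_⟩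
      exact mul_mem
        (Subgroup.closure_mono (by simp [Finset.coe_union]) hy)
        (Subgroup.closure_mono (by simp [Finset.coe_union]) hz)
  | inv y _ hy =>
      obtain ⟨F, hF, hy⟩ := hy
      exact ⟨F, hF, inv_mem hy⟩

end Aux

/-- If `G/Z(G)` is locally finite, then `G'` is locally finite. -/
theorem derived_locallyFinite_of_central_quotient
    (G : Type*) [Group G]
    (h : IsLocallyFiniteGroup (G ⧸ Subgroup.center G)) :
    IsLocallyFiniteGroup (commutator G) := by
  classical
  intro H hH
  obtain ⟨T, hT⟩ := hH
  -- choose for each generator a finite set of commutators generating it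
  have hmem : ∀ t : commutator G, (t : G) ∈ Subgroup.closure (commutatorSet G) := by
    intro t
    exact (le_of_eq (commutator_eq_closure G)) t.2
  choose c hc1 hc2 using fun t : commutator G => mem_closure_finset (hmem t)
  set F : Finset G := T.biUnion (fun t => c t) with hF
  have hFsub : (F : Set G) ⊆ commutatorSet G := by
    intro f hf
    simp only [hF, Finset.coe_biUnion, Set.mem_iUnion, Finset.mem_coe] at hf
    obtain ⟨t, _, hf⟩ := hf
    exact hc1 t hf
  -- choose representatives for each commutator in F
  set p₁ := fun f : (F : Set G) => (hFsub f.2).choose with hp₁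
  have hp : ∀ f : (F : Set G), ∃ b, ⁅p₁ f, b⁆ = (f : G) := fun f => (hFsub f.2).choose_spec
  set p₂ := fun f : (F : Set G) => (hp f).choose with hp₂
  have hpp : ∀ f : (F : Set G), ⁅p₁ f, p₂ f⁆ = (f : G) := fun f => (hp f).choose_spec
  set A : Set G := ⋃ f : (F : Set G), ({p₁ f, p₂ f} : Set G) with hA
  have hAfin : A.Finite := Set.finite_iUnion (fun f => Set.Finite.insert _ (Set.finite_singleton _))
  set K : Subgroup G := Subgroup.closure A with hK
  -- the image of K in G/Z(G) is finitely generated, hence finite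
  set π : G →* G ⧸ Subgroup.center G := QuotientGroup.mk' (Subgroup.center G) with hπ
  set φ : K →* G ⧸ Subgroup.center G := π.comp K.subtype with hφ
  have hrange : φ.range = Subgroup.closure (π '' A) := by
    rw [hφ, MonoidHom.range_comp, Subgroup.range_subtype, hK, MonoidHom.map_closure]
  haveI hfinQ : Finite (Subgroup.closure (π '' A)) :=
    h _ ((Subgroup.fg_iff _).mpr ⟨π '' A, rfl, hAfin.image π⟩)
  haveI hfinR : Finite φ.range := by rw [hrange]; exact hfinQ
  haveI hfinKer : Finite (K ⧸ φ.ker) :=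
    Finite.of_equiv _ (QuotientGroup.quotientKerEquivRange φ).symm.toEquiv
  have hker : φ.ker ≤ Subgroup.center K := by
    intro k hk
    have hk' : (k : G) ∈ Subgroup.center G := by
      have := hk
      simp only [hφ, MonoidHom.mem_ker, MonoidHom.comp_apply, hπ,
        QuotientGroup.mk'_apply, QuotientGroup.eq_one_iff] at this
      exact this
    rw [Subgroup.mem_center_iff]
    intro g
    exact Subtype.ext (Subgroup.mem_center_iff.mp hk' (g : G))
  haveI hfinZK : Finite (K ⧸ Subgroup.center K) := by
    refine Finite.of_surjective
      (QuotientGroup.map φ.ker (Subgroup.center K) (MonoidHom.id K)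
        (by simpa using hker)) ?_
    intro q
    refine Quotient.inductionOn' q (fun k => ⟨QuotientGroup.mk k, ?_⟩)
    rfl
  haveI : Finite (commutatorSet K) := finite_commutatorSet_of_quotient_center
  haveI hfinCK : Finite (_root_.commutator K) := inferInstance
  set M : Subgroup G := (_root_.commutator K).map K.subtype with hM
  haveI hfinM : Finite M :=
    Finite.of_equiv _
      (Subgroup.equivMapOfInjective _ _ (Subgroup.subtype_injective K)).toEquiv
  -- every element of F lies in M
  have hFM : (F : Set G) ⊆ (M : Set G) := by
    intro f hf
    have h1 : p₁ ⟨f, hf⟩ ∈ K := Subgroup.subset_closure (Set.mem_iUnion.mpr ⟨⟨f, hf⟩, by simp⟩)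
    have h2 : p₂ ⟨f, hf⟩ ∈ K := Subgroup.subset_closure (Set.mem_iUnion.mpr ⟨⟨f, hf⟩, by simp⟩)
    refine ⟨⁅(⟨_, h1⟩ : K), (⟨_, h2⟩ : K)⁆, ?_, ?_⟩
    · exact Subgroup.commutator_mem_commutator (Subgroup.mem_top _) (Subgroup.mem_top _)
    · simpa using hpp ⟨f, hf⟩
  have hFclos : Subgroup.closure (F : Set G) ≤ M := (Subgroup.closure_le _).mpr hFM
  -- every generator of H maps into M
  have hTM : (T : Set (commutator G)) ⊆ ((M.comap (commutator G).subtype : Subgroup (commutator G)) : Set (commutator G)) := by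
    intro t ht
    have : (t : G) ∈ Subgroup.closure (F : Set G) := by
      refine Subgroup.closure_mono ?_ (hc2 t)
      intro x hx
      simp only [hF, Finset.coe_biUnion, Set.mem_iUnion, Finset.mem_coe]
      exact ⟨t, ht, hx⟩
    exact hFclos this
  have hHle : H ≤ M.comap (commutator G).subtype := by
    rw [← hT]
    exact (Subgroup.closure_le _).mpr hTM
  refine Finite.of_injective (fun x : H => (⟨((x : commutator G) : G), hHle x.2⟩ : M)) ?_
  intro a b hab
  rw [Subtype.ext_iff] at hab
  exact Subtype.ext (Subtype.ext hab)
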